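/- For every integer n ≥ 0, the Sierpiński triangle graph Ŝ_3^n has a minimum feedback vertex set A such that A contains exactly one of the three extreme vertices 0̂, 1̂, 2̂. -/

import Mathlib

open SimpleGraph

/-- The Sierpinski graph `S_p^n` on vertex set `P^n`: two distinct vertices are adjacent
iff they can be written as `s i j^(d-1)` and `s j i^(d-1)`. -/
def sierpinski (p n : Nat) : SimpleGraph (Fin n → Fin p) :=
  SimpleGraph.fromRel (fun u v =>
    ∃ t : Fin n, ∃ i j : Fin p, i ≠ j ∧
      (∀ k, k < t → u k = v k) ∧ u t = i ∧ v t = j ∧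
      (∀ k, t < k → u k = j ∧ v k = i))

/-- `X` is a feedback vertex set of `G` if deleting it leaves an acyclic graph. -/
def IsFeedbackVertexSet {V : Type*} (G : SimpleGraph V) (X : Set V) : Prop :=
  (G.induce Xᶜ).IsAcyclic

/-- The feedback vertex number: the minimum cardinality of a feedback vertex set. -/
noncomputable def feedbackNumber {V : Type*} (G : SimpleGraph V) : Nat :=
  sInf {k | ∃ X : Finset V, X.card = k ∧ IsFeedbackVertexSet G ↑X}

/-- The maximum number of vertices of an induced forest of `G`. -/
noncomputable def maxInducedForest {V : Type*} (G : SimpleGraph V) : Nat :=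
  sSup {k | ∃ Y : Finset V, Y.card = k ∧ (G.induce (↑Y : Set V)).IsAcyclic}

/-- The non-clique edges of `S_p^(n+1)`: edges `{s i j^l, s j i^l}` with `l ≥ 1`,
i.e. adjacency witnessed at a position `t` with `t < n`. -/
def nonCliqueRel (p n : Nat) (u v : Fin (n+1) → Fin p) : Prop :=
  ∃ t : Fin (n+1), (t : Nat) < n ∧ ∃ i j : Fin p, i ≠ j ∧
    (∀ k, k < t → u k = v k) ∧ u t = i ∧ v t = j ∧
    (∀ k, t < k → u k = j ∧ v k = i)

/-- The setoid identifying the two endpoints of every non-clique edge of `S_p^(n+1)`. -/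
def triSetoid (p n : Nat) : Setoid (Fin (n+1) → Fin p) :=
  Relation.EqvGen.setoid (nonCliqueRel p n)

/-- The generalized Sierpinski triangle graph: the contraction of all
non-clique edges of `S_p^(n+1)`. -/
def sierpinskiTriangle (p n : Nat) : SimpleGraph (Quotient (triSetoid p n)) where
  Adj x y := x ≠ y ∧ ∃ u v : Fin (n+1) → Fin p,
    Quotient.mk (triSetoid p n) u = x ∧ Quotient.mk (triSetoid p n) v = y ∧
    (sierpinski p (n+1)).Adj u v
  symm := by
    constructor
    rintro x y ⟨hxy, u, v, hu, hv, h⟩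
    exact ⟨hxy.symm, v, u, hv, hu, h.symm⟩
  loopless := by
    constructor
    rintro x ⟨hxx, -⟩
    exact hxx rfl

section Generic
variable {V : Type*} {W : Type*} {G : SimpleGraph V} {H : SimpleGraph W}

lemma acyclic_of_embedding (f : G ↪g H) (h : H.IsAcyclic) : G.IsAcyclic := by
  intro a c hc
  exact h (c.map f.toHom) ((SimpleGraph.Walk.map_isCycle_iff_of_injective f.injective).2 hc)

/-- lift an ambient walk with support in S to the induced graph -/
def Walk.toInd {S : Set V} : ∀ {u v : V} (w : G.Walk u v) (hs : ∀ x ∈ w.support, x ∈ S),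
    (G.induce S).Walk ⟨u, hs u w.start_mem_support⟩ ⟨v, hs v w.end_mem_support⟩
  | _, _, SimpleGraph.Walk.nil, _ => SimpleGraph.Walk.nil
  | _, _, SimpleGraph.Walk.cons h p, hs =>
      SimpleGraph.Walk.cons (by exact h)
        (Walk.toInd p (fun x hx => hs x (by simp [hx])))

lemma Walk.toInd_map {S : Set V} {u v : V} (w : G.Walk u v) (hs : ∀ x ∈ w.support, x ∈ S) :
    (Walk.toInd w hs).map (SimpleGraph.Embedding.induce (G := G) S).toHom = w := by
  induction w with
  | nil => rfl
  | cons h p ih => simp only [Walk.toInd, SimpleGraph.Walk.map_cons]; exact congrArg _ (ih _)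

lemma induce_acyclic_iff {S : Set V} :
    (G.induce S).IsAcyclic ↔ ∀ (a : V) (c : G.Walk a a), c.IsCycle → ¬(∀ x ∈ c.support, x ∈ S) := by
  constructor
  · intro h a c hc hsupp
    have h2 : ((Walk.toInd c hsupp).map (SimpleGraph.Embedding.induce (G := G) S).toHom).IsCycle := by
      rw [Walk.toInd_map]; exact hc
    exact h _ ((SimpleGraph.Walk.map_isCycle_iff_of_injective
      (SimpleGraph.Embedding.induce (G := G) S).injective).1 h2)
  · intro h a c hc
    apply h a.1 (c.map (SimpleGraph.Embedding.induce (G := G) S).toHom)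
      ((SimpleGraph.Walk.map_isCycle_iff_of_injective
        (SimpleGraph.Embedding.induce (G := G) S).injective).2 hc)
    intro x hx
    erw [SimpleGraph.Walk.support_map] at hx
    obtain ⟨y, _, rfl⟩ := List.mem_map.1 hx
    exact y.2
end Generic
section Generic
variable {V : Type*} {G : SimpleGraph V}

lemma pass_lemma {A B : Set V}
    (hedge : ∀ a b, G.Adj a b → a ∈ A ∪ B → b ∈ A ∪ B → (a ∈ A ∧ b ∈ A) ∨ (a ∈ B ∧ b ∈ B)) :
    ∀ {x y : V} (w : G.Walk x y), (∀ z ∈ w.support, z ∈ A ∪ B) → x ∈ A → y ∉ A →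
      ∃ z ∈ w.support, z ∈ A ∧ z ∈ B := by
  intro x y w
  induction w with
  | nil => intro _ hx hy; exact absurd hx hy
  | @cons u c y h p ih =>
    intro hsupp hx hy
    have hu : u ∈ A ∪ B := hsupp u (SimpleGraph.Walk.start_mem_support _)
    have hcm : c ∈ A ∪ B := hsupp c (by simp [SimpleGraph.Walk.support_cons,
      SimpleGraph.Walk.start_mem_support])
    rcases hedge u c h hu hcm with ⟨_, hcA⟩ | ⟨huB, _⟩
    · obtain ⟨z, hz, hzA, hzB⟩ := ih (fun z hz => hsupp z (by simp [hz])) hcA hy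
      exact ⟨z, by simp [hz], hzA, hzB⟩
    · exact ⟨u, SimpleGraph.Walk.start_mem_support _, hx, huB⟩

lemma mem_support_tail_of_closed {a : V} (c : G.Walk a a) (hne : ¬c.Nil) {x : V}
    (hx : x ∈ c.support) : x ∈ c.support.tail := by
  cases c with
  | nil => simp at hne
  | cons h p =>
    simp only [SimpleGraph.Walk.support_cons, List.tail_cons]
    rcases List.mem_cons.1 hx with rfl | hx'
    · exact SimpleGraph.Walk.end_mem_support p
    · simpa using hx'

lemma glue_lemma [DecidableEq V] {A B : Set V} {v : V} (hAB : A ∩ B ⊆ {v})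
    (hedge : ∀ a b, G.Adj a b → a ∈ A ∪ B → b ∈ A ∪ B → (a ∈ A ∧ b ∈ A) ∨ (a ∈ B ∧ b ∈ B))
    (hA : (G.induce A).IsAcyclic) (hB : (G.induce B).IsAcyclic) :
    (G.induce (A ∪ B)).IsAcyclic := by
  rw [induce_acyclic_iff] at hA hB ⊢
  intro a c hc hsupp
  by_cases hall : ∀ x ∈ c.support, x ∈ A
  · exact hA a c hc hall
  by_cases hallB : ∀ x ∈ c.support, x ∈ B
  · exact hB a c hc hallB
  push_neg at hall hallB
  obtain ⟨b, hbmem, hbA⟩ := hall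
  obtain ⟨a', hamem, haB⟩ := hallB
  have haA : a' ∈ A := (hsupp a' hamem).resolve_right haB
  have hbB : b ∈ B := (hsupp b hbmem).resolve_left hbA
  -- rotate the cycle to start at a'
  set c' := c.rotate a' hamem with hc'def
  have hc' : c'.IsCycle := hc.rotate hamem
  have hrot := SimpleGraph.Walk.support_rotate c a' hamem
  have hsupp' : ∀ z ∈ c'.support, z ∈ A ∪ B := by
    intro z hz
    rcases List.mem_cons.1 (SimpleGraph.Walk.support_eq_cons c' ▸ hz) with rfl | hz'
    · exact hsupp _ hamem
    · exact hsupp _ (List.mem_of_mem_tail (hrot.mem_iff.1 hz'))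
  have hbmem' : b ∈ c'.support := by
    have : b ∈ c.support.tail := mem_support_tail_of_closed c hc.not_nil hbmem
    exact List.mem_of_mem_tail (hrot.mem_iff.2 this)
  set p := c'.takeUntil b hbmem' with hp
  set q := c'.dropUntil b hbmem' with hq
  have hspec : p.append q = c' := SimpleGraph.Walk.take_spec c' hbmem'
  have hps : ∀ z ∈ p.support, z ∈ A ∪ B := fun z hz =>
    hsupp' z (SimpleGraph.Walk.support_takeUntil_subset _ _ hz)
  have hqs : ∀ z ∈ q.support, z ∈ A ∪ B := fun z hz =>
    hsupp' z (SimpleGraph.Walk.support_dropUntil_subset _ _ hz)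
  obtain ⟨z1, hz1mem, hz1A, hz1B⟩ := pass_lemma hedge p hps haA hbA
  have hedge' : ∀ a b, G.Adj a b → a ∈ B ∪ A → b ∈ B ∪ A → (a ∈ B ∧ b ∈ B) ∨ (a ∈ A ∧ b ∈ A) := by
    intro a b hab ha hb
    exact (hedge a b hab (Set.union_comm A B ▸ ha) (Set.union_comm A B ▸ hb)).symm
  obtain ⟨z2, hz2mem, hz2B, hz2A⟩ := pass_lemma hedge' q
    (fun z hz => Set.union_comm A B ▸ hqs z hz) hbB haB
  have hz1v : z1 = v := hAB ⟨hz1A, hz1B⟩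
  have hz2v : z2 = v := hAB ⟨hz2A, hz2B⟩
  rw [hz1v] at hz1mem hz1A hz1B
  rw [hz2v] at hz2mem hz2A hz2B
  have hva : v ≠ a' := fun h => haB (h ▸ hz1B)
  have hvb : v ≠ b := fun h => hbA (h ▸ hz1A)
  -- v is in the tail of both p and q, contradicting nodup of c'.support.tail
  have hvp : v ∈ p.support.tail := by
    rcases List.mem_cons.1 (SimpleGraph.Walk.support_eq_cons p ▸ hz1mem) with h | h
    · exact absurd h hva
    · exact h
  have hvq : v ∈ q.support.tail := by
    rcases List.mem_cons.1 (SimpleGraph.Walk.support_eq_cons q ▸ hz2mem) with h | h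
    · exact absurd h hvb
    · exact h
  have hnd : c'.support.tail.Nodup := hc'.2
  have htail : c'.support.tail = p.support.tail ++ q.support.tail := by
    rw [← hspec, SimpleGraph.Walk.support_append]
    rw [SimpleGraph.Walk.support_eq_cons p]
    simp
  rw [htail] at hnd
  exact (List.disjoint_of_nodup_append hnd) hvp hvq
end Generic

section Words
variable {n : ℕ}

abbrev Wd (n : ℕ) := Fin (n+1) → Fin 3
abbrev Qt (n : ℕ) := Quotient (triSetoid 3 n)
abbrev qm (n : ℕ) : Wd n → Qt n := Quotient.mk (triSetoid 3 n)
abbrev ncr (n : ℕ) : Wd n → Wd n → Prop := nonCliqueRel 3 n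

lemma lt_last {t : Fin (n+1)} (ht : (t:ℕ) < n) : t < Fin.last n := by
  simp [Fin.lt_def, ht]

lemma ncr_symm {u v : Wd n} (h : ncr n u v) : ncr n v u := by
  obtain ⟨t, ht, i, j, hij, hlt, hut, hvt, hgt⟩ := h
  exact ⟨t, ht, j, i, hij.symm, fun k hk => (hlt k hk).symm, hvt, hut,
    fun k hk => ⟨(hgt k hk).2, (hgt k hk).1⟩⟩

lemma ncr_funct {u v w : Wd n} (h1 : ncr n u v) (h2 : ncr n u w) : v = w := by
  obtain ⟨t, ht, i, j, hij, hlt, hut, hvt, hgt⟩ := h1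
  obtain ⟨t', ht', i', j', hij', hlt', hut', hvt', hgt'⟩ := h2
  have htt : t = t' := by
    rcases lt_trichotomy t t' with h | h | h
    · exfalso
      have hj' : u (Fin.last n) = j' := (hgt' _ (lt_last ht')).1
      have hj : u (Fin.last n) = j := (hgt _ (lt_last ht)).1
      have : u t' = j := (hgt _ h).1
      rw [hut'] at this
      exact hij' (by rw [this, ← hj, hj'])
    · exact h
    · exfalso
      have hj' : u (Fin.last n) = j' := (hgt' _ (lt_last ht')).1
      have hj : u (Fin.last n) = j := (hgt _ (lt_last ht)).1
      have : u t = j' := (hgt' _ h).1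
      rw [hut] at this
      exact hij (by rw [this, ← hj', hj])
  subst htt
  have hii : i = i' := by rw [← hut, hut']
  have hjj : j = j' := by
    have h1 := (hgt _ (lt_last ht)).1
    have h2 := (hgt' _ (lt_last ht)).1
    rw [← h1, h2]
  funext k
  rcases lt_trichotomy k t with h | h | h
  · rw [← hlt k h, ← hlt' k h]
  · subst h; rw [hvt, hvt', hjj]
  · rw [(hgt k h).2, (hgt' k h).2, hii]

lemma qm_eq_iff {u v : Wd n} : qm n u = qm n v ↔ (u = v ∨ ncr n u v) := by
  constructor
  · intro h
    have h2 : Relation.EqvGen (ncr n) u v := Quotient.exact h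
    clear h
    induction h2 with
    | rel x y h => exact Or.inr h
    | refl x => exact Or.inl rfl
    | symm x y h ih => rcases ih with rfl | h' ; exacts [Or.inl rfl, Or.inr (ncr_symm h')]
    | trans x y z h1 h2 ih1 ih2 =>
      rcases ih1 with rfl | h1' 
      · exact ih2
      rcases ih2 with rfl | h2'
      · exact Or.inr h1'
      · exact Or.inl (ncr_funct (ncr_symm h1') h2')
  · rintro (rfl | h)
    · rfl
    · exact Quotient.sound (Relation.EqvGen.rel _ _ h)

lemma snoc_agree {s : Fin n → Fin 3} {a : Fin 3} {k : Fin (n+1)} (hk : (k:ℕ) < n) :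
    (Fin.snoc s a : Wd n) k = s ⟨k, hk⟩ := by
  have h2 := Fin.snoc_castSucc (α := fun _ : Fin (n+1) => Fin 3) a s ⟨k, hk⟩
  have : Fin.castSucc ⟨k, hk⟩ = k := by ext; simp
  rw [this] at h2
  exact h2

lemma tri_ne {s : Fin n → Fin 3} {a b : Fin 3} (hab : a ≠ b) :
    qm n (Fin.snoc s a) ≠ qm n (Fin.snoc s b) := by
  intro h
  rcases qm_eq_iff.1 h with h | h
  · apply hab
    have := congrFun h (Fin.last n)
    simpa using this
  · obtain ⟨t, ht, i, j, hij, hlt, hut, hvt, hgt⟩ := h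
    apply hij
    rw [← hut, ← hvt, snoc_agree ht, snoc_agree ht]

/-- analysis of a `sierpinski` pre-edge -/
lemma rel_cases {u v : Wd n}
    (h : ∃ t : Fin (n+1), ∃ i j : Fin 3, i ≠ j ∧
      (∀ k, k < t → u k = v k) ∧ u t = i ∧ v t = j ∧
      (∀ k, t < k → u k = j ∧ v k = i)) :
    qm n u = qm n v ∨ ∃ (s : Fin n → Fin 3) (a b : Fin 3), a ≠ b ∧
      u = Fin.snoc s a ∧ v = Fin.snoc s b := by
  obtain ⟨t, i, j, hij, hlt, hut, hvt, hgt⟩ := h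
  by_cases ht : (t:ℕ) < n
  · exact Or.inl (qm_eq_iff.2 (Or.inr ⟨t, ht, i, j, hij, hlt, hut, hvt, hgt⟩))
  · have htl : t = Fin.last n := by
      ext; simpa [Fin.last] using Nat.le_antisymm (Nat.lt_succ_iff.1 t.2) (Nat.le_of_not_lt ht)
    subst htl
    refine Or.inr ⟨fun k => u (Fin.castSucc k), i, j, hij, ?_, ?_⟩
    · funext k
      refine Fin.lastCases ?_ ?_ k
      · simpa [Fin.snoc_last] using hut
      · intro k'; simp [Fin.snoc_castSucc]
    · funext k
      refine Fin.lastCases ?_ ?_ k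
      · simpa [Fin.snoc_last] using hvt
      · intro k'
        rw [Fin.snoc_castSucc, ← hlt _ (Fin.castSucc_lt_last k')]

lemma adj_iff {x y : Qt n} :
    (sierpinskiTriangle 3 n).Adj x y ↔ ∃ (s : Fin n → Fin 3) (a b : Fin 3), a ≠ b ∧
      x = qm n (Fin.snoc s a) ∧ y = qm n (Fin.snoc s b) := by
  constructor
  · rintro ⟨hne, u, v, rfl, rfl, hadj⟩
    rw [sierpinski, SimpleGraph.fromRel_adj] at hadj
    obtain ⟨huv, hrel | hrel⟩ := hadj
    · rcases rel_cases hrel with h | ⟨s, a, b, hab, rfl, rfl⟩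
      · exact absurd h hne
      · exact ⟨s, a, b, hab, rfl, rfl⟩
    · rcases rel_cases hrel with h | ⟨s, a, b, hab, rfl, rfl⟩
      · exact absurd h.symm hne
      · exact ⟨s, b, a, hab.symm, rfl, rfl⟩
  · rintro ⟨s, a, b, hab, rfl, rfl⟩
    refine ⟨tri_ne hab, Fin.snoc s a, Fin.snoc s b, rfl, rfl, ?_⟩
    rw [sierpinski, SimpleGraph.fromRel_adj]
    constructor
    · intro h
      apply hab
      have := congrFun h (Fin.last n)
      simpa using this
    · refine Or.inl ⟨Fin.last n, a, b, hab, ?_, by simp, by simp, ?_⟩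
      · intro k hk
        have hk' : (k:ℕ) < n := by simpa [Fin.lt_def] using hk
        rw [snoc_agree hk', snoc_agree hk']
      · intro k hk
        exact absurd hk (by simp [Fin.lt_def]; omega)

lemma ncr_const {u : Wd n} {k : Fin 3} : ¬ ncr n u (fun _ => k) := by
  rintro ⟨t, ht, i, j, hij, hlt, hut, hvt, hgt⟩
  have hi : k = i := (hgt _ (lt_last ht)).2
  have hj : k = j := hvt
  exact hij (hi.symm.trans hj)

lemma qm_const_iff {u : Wd n} {k : Fin 3} : qm n u = qm n (fun _ => k) ↔ u = fun _ => k := by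
  rw [qm_eq_iff]
  exact ⟨fun h => h.resolve_right ncr_const, Or.inl⟩

lemma ext_inj {k k' : Fin 3} (h : qm n (fun _ => k) = qm n (fun _ => k')) : k = k' := by
  have := qm_const_iff.1 h
  exact congrFun this 0

end Words

section Cons
variable {n : ℕ}

lemma cons_snoc (i : Fin 3) (s : Fin n → Fin 3) (a : Fin 3) :
    (Fin.cons i (Fin.snoc s a : Wd n) : Wd (n+1)) = Fin.snoc (Fin.cons i s) a := by
  funext k
  refine Fin.lastCases ?_ ?_ k
  · have h1 : (Fin.last (n+1)) = (Fin.last n).succ := by ext; simp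
    rw [Fin.snoc_last, h1, Fin.cons_succ, Fin.snoc_last]
  · intro j
    refine Fin.cases ?_ ?_ j
    · have : Fin.castSucc (0 : Fin (n+1)) = (0 : Fin (n+2)) := by ext; simp
      rw [Fin.snoc_castSucc, this, Fin.cons_zero, Fin.cons_zero]
    · intro j'
      have : Fin.castSucc (j'.succ) = (Fin.castSucc j').succ := by ext; simp
      rw [Fin.snoc_castSucc, Fin.cons_succ, this, Fin.cons_succ, Fin.snoc_castSucc]

lemma ncr_cons {u v : Wd n} {i : Fin 3} (h : ncr n u v) :
    ncr (n+1) (Fin.cons i u) (Fin.cons i v) := by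
  obtain ⟨t, ht, a, b, hab, hlt, hut, hvt, hgt⟩ := h
  refine ⟨t.succ, by simpa using ht, a, b, hab, ?_, by simpa using hut, by simpa using hvt, ?_⟩
  · intro k
    refine Fin.cases ?_ ?_ k
    · intro _; rfl
    · intro k' hk'
      simp only [Fin.cons_succ]
      exact hlt k' (by simpa [Fin.succ_lt_succ_iff] using hk')
  · intro k
    refine Fin.cases ?_ ?_ k
    · intro h0; exact absurd h0 (by simp [Fin.lt_def])
    · intro k' hk'
      simp only [Fin.cons_succ]
      exact hgt k' (by simpa [Fin.succ_lt_succ_iff] using hk')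

lemma ncr_cons_rev {u v : Wd n} {i : Fin 3} (h : ncr (n+1) (Fin.cons i u) (Fin.cons i v)) :
    ncr n u v := by
  obtain ⟨t, ht, a, b, hab, hlt, hut, hvt, hgt⟩ := h
  have ht0 : t ≠ 0 := by
    rintro rfl
    apply hab
    rw [← hut, ← hvt]
    rfl
  obtain ⟨t', rfl⟩ := Fin.eq_succ_of_ne_zero ht0
  refine ⟨t', by simpa using ht, a, b, hab, ?_, by simpa using hut, by simpa using hvt, ?_⟩
  · intro k hk
    have := hlt k.succ (by simpa [Fin.succ_lt_succ_iff] using hk)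
    simpa using this
  · intro k hk
    have := hgt k.succ (by simpa [Fin.succ_lt_succ_iff] using hk)
    simpa using this

lemma qm_cons_inj {u v : Wd n} {i : Fin 3}
    (h : qm (n+1) (Fin.cons i u) = qm (n+1) (Fin.cons i v)) : qm n u = qm n v := by
  rcases qm_eq_iff.1 h with h | h
  · have : u = v := by
      funext k
      have := congrFun h k.succ
      simpa using this
    rw [this]
  · exact qm_eq_iff.2 (Or.inr (ncr_cons_rev h))

/-- the copy embedding on vertices -/
def emb (i : Fin 3) : Qt n → Qt (n+1) :=
  Quotient.lift (fun u => qm (n+1) (Fin.cons i u)) (by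
    intro u v h
    have h2 : u = v ∨ ncr n u v := by
      rw [← qm_eq_iff]
      exact Quotient.sound h
    rcases h2 with rfl | h2
    · rfl
    · exact qm_eq_iff.2 (Or.inr (ncr_cons h2)))

lemma emb_mk (i : Fin 3) (u : Wd n) : emb i (qm n u) = qm (n+1) (Fin.cons i u) := rfl

lemma emb_inj {i : Fin 3} : Function.Injective (emb (n := n) i) := by
  intro x y
  refine Quotient.inductionOn₂ x y ?_
  intro u v h
  exact qm_cons_inj h

def Sset (n : ℕ) (i : Fin 3) : Set (Qt (n+1)) := Set.range (emb (n := n) i)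

lemma mem_Sset_self (w : Wd (n+1)) : qm (n+1) w ∈ Sset n (w 0) := by
  refine ⟨qm n (Fin.tail w), ?_⟩
  rw [emb_mk]
  congr 1
  exact Fin.cons_self_tail w

def mid (n : ℕ) (i j : Fin 3) : Qt (n+1) := qm (n+1) (Fin.cons i (fun _ => j))

lemma mid_comm {i j : Fin 3} (hij : i ≠ j) : mid n i j = mid n j i := by
  refine qm_eq_iff.2 (Or.inr ⟨0, n.succ_pos, i, j, hij, ?_, rfl, rfl, ?_⟩)
  · intro k hk; exact absurd hk (by simp [Fin.lt_def])
  · intro k hk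
    obtain ⟨k', rfl⟩ := Fin.eq_succ_of_ne_zero (Fin.pos_iff_ne_zero.mp hk)
    constructor <;> simp

lemma mem_inter_Sset {i j : Fin 3} (hij : i ≠ j) {x : Qt (n+1)}
    (hi : x ∈ Sset n i) (hj : x ∈ Sset n j) : x = mid n i j := by
  obtain ⟨u, rfl⟩ := hi
  obtain ⟨v, hv⟩ := hj
  revert hv
  refine Quotient.inductionOn₂ u v ?_
  intro u' v' hv
  rcases qm_eq_iff.1 hv with h | h
  · exact absurd (congrFun h 0).symm hij
  · obtain ⟨t, ht, a, b, hab, hlt, hut, hvt, hgt⟩ := h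
    have ht0 : t = 0 := by
      by_contra ht0
      have h0 : (0 : Fin (n+2)) < t := Fin.pos_of_ne_zero ht0
      exact hij (show i = j from (hlt 0 h0).symm)
    subst ht0
    have ha : a = j := hut.symm
    have hu' : u' = fun _ => j := by
      funext k'
      have := (hgt k'.succ (Fin.succ_pos k')).2
      rw [ha] at this
      simpa using this
    show qm (n+1) (Fin.cons i u') = mid n i j
    rw [hu']
    rfl
end Cons

section Cons2
variable {n : ℕ}

lemma mid_mem_left (i j : Fin 3) : mid n i j ∈ Sset n i := ⟨qm n (fun _ => j), rfl⟩

lemma mid_mem_right {i j : Fin 3} (hij : i ≠ j) : mid n i j ∈ Sset n j := by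
  rw [mid_comm hij]; exact mid_mem_left j i

lemma Sset_cover (x : Qt (n+1)) : ∃ i, x ∈ Sset n i := by
  refine Quotient.inductionOn x ?_
  intro w
  exact ⟨w 0, mem_Sset_self w⟩

lemma cons_const (i : Fin 3) : (Fin.cons i (fun _ => i) : Wd (n+1)) = fun _ => i := by
  funext k
  refine Fin.cases ?_ ?_ k <;> simp

lemma emb_ext_self (i : Fin 3) : emb (n := n) i (qm n (fun _ => i)) = qm (n+1) (fun _ => i) := by
  rw [emb_mk, cons_const]

lemma emb_eq_ext {i k : Fin 3} {x : Qt n} (h : emb i x = qm (n+1) (fun _ => k)) :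
    i = k ∧ x = qm n (fun _ => k) := by
  revert h
  refine Quotient.inductionOn x ?_
  intro u h
  rw [emb_mk] at h
  have h2 := qm_const_iff.1 h
  have hik : i = k := by simpa using congrFun h2 0
  refine ⟨hik, ?_⟩
  have : u = fun _ => k := by
    funext k'
    simpa using congrFun h2 k'.succ
  rw [this]

lemma mid_ne_ext {i j k : Fin 3} (hij : i ≠ j) : mid n i j ≠ qm (n+1) (fun _ => k) := by
  intro h
  have h2 := qm_const_iff.1 h
  have h0 : i = k := by simpa using congrFun h2 0
  have h1 : j = k := by simpa using congrFun h2 ((0 : Fin (n+1)).succ)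
  exact hij (h0.trans h1.symm)

lemma mid_eq_cases {i j k l : Fin 3} (hij : i ≠ j) (hkl : k ≠ l)
    (h : mid n i j = mid n k l) : (i = k ∧ j = l) ∨ (i = l ∧ j = k) := by
  rcases qm_eq_iff.1 h with h | h
  · refine Or.inl ⟨by simpa using congrFun h 0, by simpa using congrFun h ((0 : Fin (n+1)).succ)⟩
  · obtain ⟨t, ht, a, b, hab, hlt, hut, hvt, hgt⟩ := h
    rcases eq_or_ne t 0 with rfl | ht0
    · -- i = a? u side: cons i (const j), v side: cons k (const l)
      have ha : i = a := hut
      have hb : k = b := hvt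
      have hj : j = b := by
        have := (hgt ((0 : Fin (n+1)).succ) (Fin.succ_pos _)).1
        simpa using this
      have hl : l = a := by
        have := (hgt ((0 : Fin (n+1)).succ) (Fin.succ_pos _)).2
        simpa using this
      exact Or.inr ⟨ha.trans hl.symm, hj.trans hb.symm⟩
    · exfalso
      have h0 : (0 : Fin (n+2)) < t := Fin.pos_of_ne_zero ht0
      have hik : i = k := by simpa using hlt 0 h0
      -- u t = a with t > 0 means j = a ; u at last = b means j = b, contra
      have hja : j = a := by
        obtain ⟨t', rfl⟩ := Fin.eq_succ_of_ne_zero ht0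
        simpa using hut
      have hjb : j = b := by
        have hlast := (hgt (Fin.last (n+1)) (lt_last ht)).1
        have : Fin.last (n+1) = ((Fin.last n).succ : Fin (n+2)) := by ext; simp
        rw [this] at hlast
        simpa using hlast
      exact hab (hja.symm.trans hjb)

lemma snoc_mem_Sset (S : Fin (n+1) → Fin 3) (a : Fin 3) :
    qm (n+1) (Fin.snoc S a) ∈ Sset n (S 0) := by
  have h := mem_Sset_self (Fin.snoc S a : Wd (n+1))
  have h0 : (Fin.snoc S a : Wd (n+1)) 0 = S 0 := by
    have := snoc_agree (s := S) (a := a) (k := (0 : Fin (n+2))) (by simp)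
    simpa using this
  rwa [h0] at h

lemma emb_adj {i : Fin 3} {x y : Qt n} :
    (sierpinskiTriangle 3 (n+1)).Adj (emb i x) (emb i y) ↔ (sierpinskiTriangle 3 n).Adj x y := by
  constructor
  · intro h
    obtain ⟨S, a, b, hab, hx, hy⟩ := adj_iff.1 h
    have hSx : qm (n+1) (Fin.snoc S a) ∈ Sset n (S 0) := snoc_mem_Sset S a
    have hSy : qm (n+1) (Fin.snoc S b) ∈ Sset n (S 0) := snoc_mem_Sset S b
    rcases eq_or_ne (S 0) i with h0 | h0
    · -- S = cons i (tail S)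
      have hS : emb i (qm n (Fin.snoc (Fin.tail S) a)) = qm (n+1) (Fin.snoc S a) := by
        rw [emb_mk, cons_snoc, ← h0, Fin.cons_self_tail]
      have hS' : emb i (qm n (Fin.snoc (Fin.tail S) b)) = qm (n+1) (Fin.snoc S b) := by
        rw [emb_mk, cons_snoc, ← h0, Fin.cons_self_tail]
      have hx' : x = qm n (Fin.snoc (Fin.tail S) a) := emb_inj (i := i) (hx.trans hS.symm)
      have hy' : y = qm n (Fin.snoc (Fin.tail S) b) := emb_inj (i := i) (hy.trans hS'.symm)
      exact adj_iff.2 ⟨Fin.tail S, a, b, hab, hx', hy'⟩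
    · exfalso
      have hxm : emb i x = mid n i (S 0) :=
        mem_inter_Sset (Ne.symm h0) ⟨x, rfl⟩ (hx ▸ hSx)
      have hym : emb i y = mid n i (S 0) :=
        mem_inter_Sset (Ne.symm h0) ⟨y, rfl⟩ (hy ▸ hSy)
      exact h.ne (hxm.trans hym.symm)
  · intro h
    obtain ⟨s, a, b, hab, rfl, rfl⟩ := adj_iff.1 h
    refine adj_iff.2 ⟨Fin.cons i s, a, b, hab, ?_, ?_⟩ <;>
      rw [emb_mk, cons_snoc]

/-- the copy embedding as a graph embedding -/
def embG (i : Fin 3) : (sierpinskiTriangle 3 n) ↪g (sierpinskiTriangle 3 (n+1)) where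
  toFun := emb i
  inj' := emb_inj
  map_rel_iff' := emb_adj

end Cons2

section Transfer
variable {V : Type*} {W : Type*} {G : SimpleGraph V} {H : SimpleGraph W}

lemma acyclic_induce_image (e : G ↪g H) (T : Set V) (h : (G.induce T).IsAcyclic) :
    (H.induce (⇑e '' T)).IsAcyclic := by
  have emb2 : (H.induce (⇑e '' T)) ↪g (G.induce T) := by
    refine ⟨⟨fun x => ⟨x.2.choose, x.2.choose_spec.1⟩, ?_⟩, ?_⟩
    · intro x y hxy
      apply Subtype.ext
      rw [← x.2.choose_spec.2, ← y.2.choose_spec.2]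
      exact congrArg e (congrArg Subtype.val hxy)
    · intro x y
      show G.Adj _ _ ↔ H.Adj x.1 y.1
      rw [← x.2.choose_spec.2, ← y.2.choose_spec.2]
      exact e.map_rel_iff.symm
  exact acyclic_of_embedding emb2 h

lemma fvs_image_iso (e : G ≃g H) {X : Set V} (h : IsFeedbackVertexSet G X) :
    IsFeedbackVertexSet H (⇑e '' X) := by
  unfold IsFeedbackVertexSet at *
  rw [← Set.image_compl_eq e.bijective]
  exact acyclic_induce_image e.toEmbedding _ h

lemma acyclic_of_two (a b : V) (h : ∀ x : V, x = a ∨ x = b) : G.IsAcyclic := by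
  classical
  intro v c hc
  have h3 := hc.three_le_length
  have hnd : c.support.tail.Nodup := (SimpleGraph.Walk.isCycle_def c).1 hc |>.2.2
  have hcard := List.toFinset_card_of_nodup hnd
  have hlen : c.support.tail.length = c.length := by
    have := SimpleGraph.Walk.length_support c
    have ht : c.support.tail.length = c.support.length - 1 := by simp
    omega
  have hsub : c.support.tail.toFinset ⊆ {a, b} := by
    intro x hx
    rcases h x with rfl | rfl <;> simp
  have hle := Finset.card_le_card hsub
  have : ({a, b} : Finset V).card ≤ 2 := Finset.card_insert_le _ _ |>.trans (by simp)
  omega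

lemma triangle_isCycle {a b c : V} (hab : G.Adj a b) (hbc : G.Adj b c) (hca : G.Adj c a)
    (h2 : a ≠ c) :
    (SimpleGraph.Walk.cons hab (SimpleGraph.Walk.cons hbc
      (SimpleGraph.Walk.cons hca SimpleGraph.Walk.nil))).IsCycle := by
  rw [SimpleGraph.Walk.isCycle_def]
  refine ⟨?_, by simp, ?_⟩
  · rw [SimpleGraph.Walk.isTrail_def]
    simp only [SimpleGraph.Walk.edges_cons, SimpleGraph.Walk.edges_nil]
    have h1 : a ≠ b := hab.ne
    have h3 : b ≠ c := hbc.ne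
    simp [Sym2.eq_iff]
    tauto
  · simp only [SimpleGraph.Walk.support_cons, SimpleGraph.Walk.support_nil, List.tail_cons]
    have h1 : a ≠ b := hab.ne
    have h3 : b ≠ c := hbc.ne
    simp [h2.symm, h3, (h1.symm : b ≠ a)]
end Transfer

section Perm
variable {n : ℕ}

lemma ncr_perm (σ : Equiv.Perm (Fin 3)) {u v : Wd n} (h : ncr n u v) :
    ncr n (σ ∘ u) (σ ∘ v) := by
  obtain ⟨t, ht, i, j, hij, hlt, hut, hvt, hgt⟩ := h
  refine ⟨t, ht, σ i, σ j, fun he => hij (σ.injective he), ?_, ?_, ?_, ?_⟩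
  · intro k hk; exact congrArg σ (hlt k hk)
  · exact congrArg σ hut
  · exact congrArg σ hvt
  · intro k hk; exact ⟨congrArg σ (hgt k hk).1, congrArg σ (hgt k hk).2⟩

def pmap (σ : Equiv.Perm (Fin 3)) : Qt n → Qt n :=
  Quotient.lift (fun w => qm n (σ ∘ w)) (by
    intro u v h
    have h2 : u = v ∨ ncr n u v := by rw [← qm_eq_iff]; exact Quotient.sound h
    rcases h2 with rfl | h2
    · rfl
    · exact qm_eq_iff.2 (Or.inr (ncr_perm σ h2)))

lemma pmap_mk (σ : Equiv.Perm (Fin 3)) (w : Wd n) : pmap σ (qm n w) = qm n (σ ∘ w) := rfl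

lemma pmap_pmap (σ τ : Equiv.Perm (Fin 3)) (x : Qt n) :
    pmap σ (pmap τ x) = pmap (σ * τ) x := by
  refine Quotient.inductionOn x ?_
  intro w; rfl

lemma pmap_inv (σ : Equiv.Perm (Fin 3)) (x : Qt n) : pmap σ⁻¹ (pmap σ x) = x := by
  refine Quotient.inductionOn x ?_
  intro w
  show qm n (⇑σ⁻¹ ∘ (⇑σ ∘ w)) = qm n w
  congr 1
  funext k
  simp

lemma perm_snoc (σ : Equiv.Perm (Fin 3)) (s : Fin n → Fin 3) (a : Fin 3) :
    σ ∘ (Fin.snoc s a : Wd n) = Fin.snoc (σ ∘ s) (σ a) := by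
  funext k
  refine Fin.lastCases ?_ ?_ k
  · simp
  · intro j; simp

lemma pmap_adj (σ : Equiv.Perm (Fin 3)) {x y : Qt n}
    (h : (sierpinskiTriangle 3 n).Adj x y) :
    (sierpinskiTriangle 3 n).Adj (pmap σ x) (pmap σ y) := by
  obtain ⟨s, a, b, hab, rfl, rfl⟩ := adj_iff.1 h
  refine adj_iff.2 ⟨σ ∘ s, σ a, σ b, fun he => hab (σ.injective he), ?_, ?_⟩ <;>
    rw [pmap_mk, perm_snoc]

def permG (σ : Equiv.Perm (Fin 3)) : (sierpinskiTriangle 3 n) ≃g (sierpinskiTriangle 3 n) where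
  toFun := pmap σ
  invFun := pmap σ⁻¹
  left_inv := pmap_inv σ
  right_inv := fun x => by
    have := pmap_inv σ⁻¹ x
    simpa using this
  map_rel_iff' := by
    intro x y
    show (sierpinskiTriangle 3 n).Adj (pmap σ x) (pmap σ y) ↔ _
    constructor
    · intro h
      have h2 := pmap_adj σ⁻¹ h
      rwa [pmap_inv, pmap_inv] at h2
    · exact pmap_adj σ

lemma pmap_ext (σ : Equiv.Perm (Fin 3)) (k : Fin 3) :
    pmap (n := n) σ (qm n (fun _ => k)) = qm n (fun _ => σ k) := rfl

def exts (n : ℕ) : Set (Qt n) := Set.range (fun i : Fin 3 => qm n (fun _ => i))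

lemma pmap_exts (σ : Equiv.Perm (Fin 3)) : (pmap (n := n) σ) '' (exts n) = exts n := by
  ext x
  constructor
  · rintro ⟨y, ⟨k, rfl⟩, rfl⟩
    exact ⟨σ k, (pmap_ext σ k).symm⟩
  · rintro ⟨k, rfl⟩
    exact ⟨qm n (fun _ => σ⁻¹ k), ⟨σ⁻¹ k, rfl⟩, by rw [pmap_ext]; simp⟩
end Perm

section Lower
variable {n : ℕ}

lemma snoc_inj {s s' : Fin n → Fin 3} {a a' : Fin 3}
    (h : (Fin.snoc s a : Wd n) = Fin.snoc s' a') : s = s' ∧ a = a' := by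
  constructor
  · funext k
    have := congrFun h (Fin.castSucc k)
    simpa using this
  · have := congrFun h (Fin.last n)
    simpa using this

lemma fvs_lower (Y : Finset (Qt n)) (hY : IsFeedbackVertexSet (sierpinskiTriangle 3 n) ↑Y) :
    (3^n+1)/2 ≤ Y.card := by
  classical
  have hit : ∀ s : Fin n → Fin 3, ∃ a : Fin 3, qm n (Fin.snoc s a) ∈ Y := by
    intro s
    by_contra hno
    push_neg at hno
    unfold IsFeedbackVertexSet at hY
    rw [induce_acyclic_iff] at hY
    have h01 : (sierpinskiTriangle 3 n).Adj (qm n (Fin.snoc s 0)) (qm n (Fin.snoc s 1)) :=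
      adj_iff.2 ⟨s, 0, 1, by decide, rfl, rfl⟩
    have h12 : (sierpinskiTriangle 3 n).Adj (qm n (Fin.snoc s 1)) (qm n (Fin.snoc s 2)) :=
      adj_iff.2 ⟨s, 1, 2, by decide, rfl, rfl⟩
    have h20 : (sierpinskiTriangle 3 n).Adj (qm n (Fin.snoc s 2)) (qm n (Fin.snoc s 0)) :=
      adj_iff.2 ⟨s, 2, 0, by decide, rfl, rfl⟩
    have hc := triangle_isCycle h01 h12 h20 (tri_ne (by decide))
    apply hY _ _ hc
    intro x hx
    simp only [SimpleGraph.Walk.support_cons, SimpleGraph.Walk.support_nil,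
      List.mem_cons, List.mem_singleton, List.not_mem_nil, or_false] at hx
    show x ∈ (↑Y : Set (Qt n))ᶜ
    rcases hx with h | h | h | h <;> rw [h] <;>
      simp only [Set.mem_compl_iff, Finset.mem_coe] <;> exact hno _
  choose g hg using hit
  have hmaps : ∀ s ∈ (Finset.univ : Finset (Fin n → Fin 3)), qm n (Fin.snoc s (g s)) ∈ Y :=
    fun s _ => hg s
  have hfib : ∀ y ∈ Y,
      (Finset.univ.filter (fun s => qm n (Fin.snoc s (g s)) = y)).card ≤ 2 := by
    intro y _
    by_contra hgt
    push_neg at hgt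
    rw [Finset.two_lt_card_iff] at hgt
    obtain ⟨s1, s2, s3, hm1, hm2, hm3, h12, h13, h23⟩ := hgt
    simp only [Finset.mem_filter] at hm1 hm2 hm3
    obtain ⟨w, hw⟩ := Quotient.exists_rep y
    have key : ∀ s : Fin n → Fin 3, qm n (Fin.snoc s (g s)) = y → (Fin.snoc s (g s) : Wd n) = w ∨
        ncr n w (Fin.snoc s (g s)) := by
      intro s hs
      have h0 : qm n (Fin.snoc s (g s)) = qm n w := hs.trans hw.symm
      rcases qm_eq_iff.1 h0 with h | h
      · exact Or.inl h
      · exact Or.inr (ncr_symm h)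
    have hk1 := key s1 hm1.2
    have hk2 := key s2 hm2.2
    have hk3 := key s3 hm3.2
    have hE : ∀ {s s' : Fin n → Fin 3}, (Fin.snoc s (g s) : Wd n) = w →
        (Fin.snoc s' (g s') : Wd n) = w → s = s' := by
      intro s s' h h'
      exact (snoc_inj (h.trans h'.symm)).1
    have hN : ∀ {s s' : Fin n → Fin 3}, ncr n w (Fin.snoc s (g s)) →
        ncr n w (Fin.snoc s' (g s')) → s = s' := by
      intro s s' h h'
      exact (snoc_inj (ncr_funct h h')).1
    rcases hk1 with e1 | n1 <;> rcases hk2 with e2 | n2 <;> rcases hk3 with e3 | n3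
    · exact h12 (hE e1 e2)
    · exact h12 (hE e1 e2)
    · exact h13 (hE e1 e3)
    · exact h23 (hN n2 n3)
    · exact h23 (hE e2 e3)
    · exact h13 (hN n1 n3)
    · exact h12 (hN n1 n2)
    · exact h12 (hN n1 n2)
  have hcount := Finset.card_le_mul_card_image_of_maps_to hmaps 2 hfib
  rw [Finset.card_univ, Fintype.card_fun] at hcount
  simp only [Fintype.card_fin] at hcount
  obtain ⟨m, hm⟩ := (Odd.pow (by decide : Odd 3) : Odd (3^n))
  omega
end Lower

section Main
variable {n : ℕ}

def GoodFVS (n : ℕ) (k : Fin 3) (X : Finset (Qt n)) : Prop :=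
  X.card = (3^n+1)/2 ∧ IsFeedbackVertexSet (sierpinskiTriangle 3 n) ↑X ∧
  ((↑X : Set (Qt n)) ∩ exts n) = {qm n (fun _ => k)}

lemma fin3_cases : ∀ j : Fin 3, j = 0 ∨ j = 1 ∨ j = 2 := by decide

lemma pmap_injective (σ : Equiv.Perm (Fin 3)) : Function.Injective (pmap (n := n) σ) :=
  Function.LeftInverse.injective (pmap_inv σ)

lemma perm_transfer (k : Fin 3) (h : ∃ X, GoodFVS n 0 X) : ∃ X, GoodFVS n k X := by
  classical
  obtain ⟨X, hcard, hfvs, hext⟩ := h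
  refine ⟨X.image (pmap (Equiv.swap 0 k)), ?_, ?_, ?_⟩
  · rw [Finset.card_image_of_injective _ (pmap_injective _)]
    exact hcard
  · show IsFeedbackVertexSet _ _
    rw [Finset.coe_image]
    exact fvs_image_iso (permG (Equiv.swap 0 k)) hfvs
  · rw [Finset.coe_image]
    calc pmap (Equiv.swap 0 k) '' ↑X ∩ exts n
        = pmap (Equiv.swap 0 k) '' ↑X ∩ pmap (Equiv.swap 0 k) '' exts n := by
          rw [pmap_exts]
      _ = pmap (Equiv.swap 0 k) '' ((↑X : Set (Qt n)) ∩ exts n) :=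
          (Set.image_inter (pmap_injective _)).symm
      _ = pmap (Equiv.swap 0 k) '' {qm n (fun _ => 0)} := by rw [hext]
      _ = {qm n (fun _ => k)} := by
          rw [Set.image_singleton, pmap_ext, Equiv.swap_apply_left]

lemma good_mem {k : Fin 3} {X : Finset (Qt n)}
    (h : (↑X : Set (Qt n)) ∩ exts n = {qm n (fun _ => k)}) :
    qm n (fun _ => k) ∈ X ∧ ∀ j, j ≠ k → qm n (fun _ => j) ∉ X := by
  constructor
  · have : qm n (fun _ => k) ∈ ({qm n (fun _ => k)} : Set (Qt n)) := rfl
    rw [← h] at this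
    exact this.1
  · intro j hj hmem
    have : qm n (fun _ => j) ∈ ((↑X : Set (Qt n)) ∩ exts n) := ⟨hmem, ⟨j, rfl⟩⟩
    rw [h] at this
    exact hj (ext_inj this)

lemma base_case : ∃ X, GoodFVS 0 0 X := by
  classical
  refine ⟨{qm 0 (fun _ => 0)}, by simp, ?_, ?_⟩
  · unfold IsFeedbackVertexSet
    apply acyclic_of_two (a := ⟨qm 0 (fun _ => (1 : Fin 3)), by
        simp only [Finset.coe_singleton, Set.mem_compl_iff, Set.mem_singleton_iff]
        exact fun h => absurd (ext_inj h) (by decide)⟩)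
      (b := ⟨qm 0 (fun _ => (2 : Fin 3)), by
        simp only [Finset.coe_singleton, Set.mem_compl_iff, Set.mem_singleton_iff]
        exact fun h => absurd (ext_inj h) (by decide)⟩)
    rintro ⟨x, hx⟩
    obtain ⟨w, hw⟩ := Quotient.exists_rep x
    have hwc : w = fun _ => w 0 := by
      funext k
      exact congrArg w (Fin.eq_zero k)
    have hx' : x = qm 0 (fun _ => w 0) := by rw [← hw]; exact congrArg (qm 0) hwc
    simp only [Finset.coe_singleton, Set.mem_compl_iff, Set.mem_singleton_iff] at hx
    rcases fin3_cases (w 0) with h0 | h0 | h0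
    · refine absurd ?_ hx
      rw [hx']
      exact congrArg (qm 0) (funext fun _ => h0)
    · left; apply Subtype.ext
      show x = qm 0 (fun _ => (1 : Fin 3))
      rw [hx']
      exact congrArg (qm 0) (funext fun _ => h0)
    · right; apply Subtype.ext
      show x = qm 0 (fun _ => (2 : Fin 3))
      rw [hx']
      exact congrArg (qm 0) (funext fun _ => h0)
  · rw [Finset.coe_singleton]
    ext x
    constructor
    · rintro ⟨h1, _⟩; exact h1
    · rintro rfl; exact ⟨rfl, ⟨0, rfl⟩⟩
end Main

section Step
variable {n : ℕ}

lemma mid_emb (i j : Fin 3) : emb (n := n) i (qm n (fun _ => j)) = mid n i j := rfl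

lemma embG_coe (i : Fin 3) : ⇑(embG (n := n) i) = emb i := rfl

lemma midim (F : Finset (Qt n)) (i j : Fin 3) [DecidableEq (Qt (n+1))] :
    mid n i j ∈ F.image (emb i) ↔ qm n (fun _ => j) ∈ F := by
  rw [Finset.mem_image]
  constructor
  · rintro ⟨y, hy, hyz⟩
    have h2 : emb i y = emb i (qm n (fun _ => j)) := hyz.trans (mid_emb i j).symm
    rwa [← emb_inj h2]
  · intro h
    exact ⟨qm n (fun _ => j), h, mid_emb i j⟩

lemma subS {F : Finset (Qt n)} {i : Fin 3} {z : Qt (n+1)} [DecidableEq (Qt (n+1))]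
    (hz : z ∈ F.image (emb i)) : z ∈ Sset n i := by
  obtain ⟨y, _, rfl⟩ := Finset.mem_image.1 hz
  exact ⟨y, rfl⟩

lemma step_case (h : ∃ X, GoodFVS n 0 X) : ∃ X, GoodFVS (n+1) 0 X := by
  classical
  obtain ⟨X0, hc0, hf0, he0⟩ := h
  obtain ⟨Xa, hca, hfa, hea⟩ := perm_transfer 2 ⟨X0, hc0, hf0, he0⟩
  obtain ⟨Xb, hcb, hfb, heb⟩ := perm_transfer 1 ⟨X0, hc0, hf0, he0⟩
  obtain ⟨h00, h0n⟩ := good_mem he0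
  obtain ⟨ha2, han⟩ := good_mem hea
  obtain ⟨hb1, hbn⟩ := good_mem heb
  set im0 := X0.image (emb (n := n) 0) with him0def
  set im1 := Xa.image (emb (n := n) 1) with him1def
  set im2 := Xb.image (emb (n := n) 2) with him2def
  -- the three complement pieces
  set A1 : Set (Qt (n+1)) := emb (n := n) 0 '' (↑X0 : Set (Qt n))ᶜ with hA1def
  set B1 : Set (Qt (n+1)) := emb (n := n) 1 '' (↑Xa : Set (Qt n))ᶜ with hB1def
  set B2 : Set (Qt (n+1)) := emb (n := n) 2 '' (↑Xb : Set (Qt n))ᶜ with hB2def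
  have hA1S : A1 ⊆ Sset n 0 := by rw [hA1def]; exact Set.image_subset_range _ _
  have hB1S : B1 ⊆ Sset n 1 := by rw [hB1def]; exact Set.image_subset_range _ _
  have hB2S : B2 ⊆ Sset n 2 := by rw [hB2def]; exact Set.image_subset_range _ _
  -- midpoint membership facts
  have hmidA1_01 : mid n 0 1 ∈ A1 := ⟨qm n (fun _ => 1), h0n 1 (by decide), mid_emb 0 1⟩
  have hmidA1_02 : mid n 0 2 ∈ A1 := ⟨qm n (fun _ => 2), h0n 2 (by decide), mid_emb 0 2⟩
  have hmidB1_01 : mid n 0 1 ∈ B1 := by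
    rw [mid_comm (by decide : (0:Fin 3) ≠ 1)]
    exact ⟨qm n (fun _ => 0), han 0 (by decide), mid_emb 1 0⟩
  have hmidB2_02 : mid n 0 2 ∈ B2 := by
    rw [mid_comm (by decide : (0:Fin 3) ≠ 2)]
    exact ⟨qm n (fun _ => 0), hbn 0 (by decide), mid_emb 2 0⟩
  have hnotB1_12 : mid n 1 2 ∉ B1 := by
    rintro ⟨y, hy, hyz⟩
    have h2 : emb 1 y = emb 1 (qm n (fun _ => 2)) := hyz.trans (mid_emb 1 2).symm
    rw [emb_inj h2] at hy
    exact hy ha2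
  have hnotB2_12 : mid n 1 2 ∉ B2 := by
    rintro ⟨y, hy, hyz⟩
    have h2 : emb 2 y = emb 2 (qm n (fun _ => 1)) := by
      rw [hyz, mid_comm (by decide : (1:Fin 3) ≠ 2)]; rfl
    rw [emb_inj h2] at hy
    exact hy hb1
  have hnotA1_12 : mid n 1 2 ∉ A1 := by
    intro hmem
    have h2 : mid n 1 2 = mid n 0 1 :=
      mem_inter_Sset (by decide) (hA1S hmem) (mid_mem_left 1 2)
    rcases mid_eq_cases (by decide) (by decide) h2 with ⟨h', _⟩ | ⟨_, h'⟩ <;> exact absurd h' (by decide)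
  -- disjointness for cardinality
  have hd01 : Disjoint im0 im1 := by
    rw [Finset.disjoint_left]
    intro x hx0 hx1
    have hm : x = mid n 0 1 := mem_inter_Sset (by decide) (subS hx0) (subS hx1)
    rw [hm, him0def, midim] at hx0
    exact h0n 1 (by decide) hx0
  have hd02 : Disjoint im0 im2 := by
    rw [Finset.disjoint_left]
    intro x hx0 hx2
    have hm : x = mid n 0 2 := mem_inter_Sset (by decide) (subS hx0) (subS hx2)
    rw [hm, him0def, midim] at hx0
    exact h0n 2 (by decide) hx0
  have hi12 : im1 ∩ im2 = {mid n 1 2} := by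
    ext x
    rw [Finset.mem_inter, Finset.mem_singleton]
    constructor
    · rintro ⟨hx1, hx2⟩
      exact mem_inter_Sset (by decide) (subS hx1) (subS hx2)
    · rintro rfl
      constructor
      · rw [him1def, midim]; exact ha2
      · rw [mid_comm (by decide : (1:Fin 3) ≠ 2), him2def, midim]; exact hb1
  refine ⟨im0 ∪ im1 ∪ im2, ?_, ?_, ?_⟩
  · -- cardinality
    have c0 : im0.card = (3^n+1)/2 := by
      rw [him0def, Finset.card_image_of_injective _ emb_inj]; exact hc0
    have c1 : im1.card = (3^n+1)/2 := by
      rw [him1def, Finset.card_image_of_injective _ emb_inj]; exact hca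
    have c2 : im2.card = (3^n+1)/2 := by
      rw [him2def, Finset.card_image_of_injective _ emb_inj]; exact hcb
    have hu12 : (im1 ∪ im2).card + 1 = im1.card + im2.card := by
      have := Finset.card_union_add_card_inter im1 im2
      rw [hi12] at this
      simpa using this
    have hd012 : Disjoint im0 (im1 ∪ im2) := Finset.disjoint_union_right.2 ⟨hd01, hd02⟩
    have hassoc : im0 ∪ im1 ∪ im2 = im0 ∪ (im1 ∪ im2) := Finset.union_assoc im0 im1 im2
    rw [hassoc, Finset.card_union_of_disjoint hd012]
    obtain ⟨m, hm⟩ := (Odd.pow (by decide : Odd 3) : Odd (3^n))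
    have h3 : 3^(n+1) = 3 * 3^n := by ring
    omega
  · -- FVS
    unfold IsFeedbackVertexSet
    have hacA1 : ((sierpinskiTriangle 3 (n+1)).induce A1).IsAcyclic :=
      acyclic_induce_image (embG 0) _ hf0
    have hacB1 : ((sierpinskiTriangle 3 (n+1)).induce B1).IsAcyclic :=
      acyclic_induce_image (embG 1) _ hfa
    have hacB2 : ((sierpinskiTriangle 3 (n+1)).induce B2).IsAcyclic :=
      acyclic_induce_image (embG 2) _ hfb
    -- glue 1
    have hglue1 : ((sierpinskiTriangle 3 (n+1)).induce (A1 ∪ B1)).IsAcyclic := by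
      apply glue_lemma (v := mid n 0 1)
      · intro x ⟨hxA, hxB⟩
        exact mem_inter_Sset (by decide) (hA1S hxA) (hB1S hxB)
      · intro a b hadj ha hb
        obtain ⟨S, c, d, hcd, rfl, rfl⟩ := adj_iff.1 hadj
        have hSa := snoc_mem_Sset S c
        have hSb := snoc_mem_Sset S d
        have hclaim0 : S 0 = 0 → ∀ z ∈ A1 ∪ B1, z ∈ Sset n 0 → z ∈ A1 := by
          intro h0 z hz hz0
          rcases hz with hz | hz
          · exact hz
          · rw [mem_inter_Sset (by decide : (0:Fin 3) ≠ 1) hz0 (hB1S hz)]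
            exact hmidA1_01
        have hclaim1 : ∀ z ∈ A1 ∪ B1, z ∈ Sset n 1 → z ∈ B1 := by
          intro z hz hz1
          rcases hz with hz | hz
          · rw [mem_inter_Sset (by decide : (0:Fin 3) ≠ 1) (hA1S hz) hz1]
            exact hmidB1_01
          · exact hz
        rcases fin3_cases (S 0) with h0 | h0 | h0
        · exact Or.inl ⟨hclaim0 h0 _ ha (h0 ▸ hSa), hclaim0 h0 _ hb (h0 ▸ hSb)⟩
        · exact Or.inr ⟨hclaim1 _ ha (h0 ▸ hSa), hclaim1 _ hb (h0 ▸ hSb)⟩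
        · exfalso
          have hclaim2 : ∀ z ∈ A1 ∪ B1, z ∈ Sset n 2 → z = mid n 0 2 := by
            intro z hz hz2
            rcases hz with hz | hz
            · exact mem_inter_Sset (by decide) (hA1S hz) hz2
            · exfalso
              have := mem_inter_Sset (by decide : (1:Fin 3) ≠ 2) (hB1S hz) hz2
              rw [this] at hz
              exact hnotB1_12 hz
          have hza := hclaim2 _ ha (h0 ▸ hSa)
          have hzb := hclaim2 _ hb (h0 ▸ hSb)
          exact hadj.ne (hza.trans hzb.symm)
      · exact hacA1
      · exact hacB1
    -- glue 2
    have hglue2 : ((sierpinskiTriangle 3 (n+1)).induce ((A1 ∪ B1) ∪ B2)).IsAcyclic := by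
      apply glue_lemma (v := mid n 0 2)
      · intro x ⟨hxAB, hxB2⟩
        rcases hxAB with hx | hx
        · exact mem_inter_Sset (by decide) (hA1S hx) (hB2S hxB2)
        · exfalso
          have := mem_inter_Sset (by decide : (1:Fin 3) ≠ 2) (hB1S hx) (hB2S hxB2)
          rw [this] at hxB2
          exact hnotB2_12 hxB2
      · intro a b hadj ha hb
        obtain ⟨S, c, d, hcd, rfl, rfl⟩ := adj_iff.1 hadj
        have hSa := snoc_mem_Sset S c
        have hSb := snoc_mem_Sset S d
        have hclaim0 : ∀ z ∈ (A1 ∪ B1) ∪ B2, z ∈ Sset n 0 → z ∈ A1 ∪ B1 := by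
          intro z hz hz0
          rcases hz with hz | hz
          · exact hz
          · rw [mem_inter_Sset (by decide : (0:Fin 3) ≠ 2) hz0 (hB2S hz)]
            exact Or.inl hmidA1_02
        have hclaim1 : ∀ z ∈ (A1 ∪ B1) ∪ B2, z ∈ Sset n 1 → z ∈ A1 ∪ B1 := by
          intro z hz hz1
          rcases hz with hz | hz
          · exact hz
          · exfalso
            have := mem_inter_Sset (by decide : (1:Fin 3) ≠ 2) hz1 (hB2S hz)
            rw [this] at hz
            exact hnotB2_12 hz
        have hclaim2 : ∀ z ∈ (A1 ∪ B1) ∪ B2, z ∈ Sset n 2 → z ∈ B2 := by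
          intro z hz hz2
          rcases hz with hz | hz
          · rcases hz with hz | hz
            · rw [mem_inter_Sset (by decide : (0:Fin 3) ≠ 2) (hA1S hz) hz2]
              exact hmidB2_02
            · exfalso
              have := mem_inter_Sset (by decide : (1:Fin 3) ≠ 2) (hB1S hz) hz2
              rw [this] at hz
              exact hnotB1_12 hz
          · exact hz
        rcases fin3_cases (S 0) with h0 | h0 | h0
        · exact Or.inl ⟨hclaim0 _ ha (h0 ▸ hSa), hclaim0 _ hb (h0 ▸ hSb)⟩
        · exact Or.inl ⟨hclaim1 _ ha (h0 ▸ hSa), hclaim1 _ hb (h0 ▸ hSb)⟩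
        · exact Or.inr ⟨hclaim2 _ ha (h0 ▸ hSa), hclaim2 _ hb (h0 ▸ hSb)⟩
      · exact hglue1
      · exact hacB2
    -- complement identity
    have hcomp : (↑(im0 ∪ im1 ∪ im2) : Set (Qt (n+1)))ᶜ = (A1 ∪ B1) ∪ B2 := by
      ext x
      simp only [Set.mem_compl_iff, Finset.coe_union, Set.mem_union, Finset.mem_coe,
        Finset.mem_union, not_or]
      constructor
      · rintro ⟨⟨hn0, hn1⟩, hn2⟩
        obtain ⟨i, y, rfl⟩ := Sset_cover x
        rcases fin3_cases i with rfl | rfl | rfl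
        · refine Or.inl (Or.inl ⟨y, ?_, rfl⟩)
          intro hy
          exact hn0 (Finset.mem_image_of_mem _ hy)
        · refine Or.inl (Or.inr ⟨y, ?_, rfl⟩)
          intro hy
          exact hn1 (Finset.mem_image_of_mem _ hy)
        · refine Or.inr ⟨y, ?_, rfl⟩
          intro hy
          exact hn2 (Finset.mem_image_of_mem _ hy)
      · intro hx
        rcases hx with (⟨y, hy, rfl⟩ | ⟨y, hy, rfl⟩) | ⟨y, hy, rfl⟩
        · refine ⟨⟨?_, ?_⟩, ?_⟩
          · intro hmem
            obtain ⟨y', hy', h'⟩ := Finset.mem_image.1 hmem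
            rw [emb_inj h'] at hy'
            exact hy hy'
          · intro hmem
            have hm : emb 0 y = mid n 0 1 :=
              mem_inter_Sset (by decide) ⟨y, rfl⟩ (subS hmem)
            rw [hm] at hmem
            rw [mid_comm (by decide : (0:Fin 3) ≠ 1), him1def, midim] at hmem
            exact han 0 (by decide) hmem
          · intro hmem
            have hm : emb 0 y = mid n 0 2 :=
              mem_inter_Sset (by decide) ⟨y, rfl⟩ (subS hmem)
            rw [hm] at hmem
            rw [mid_comm (by decide : (0:Fin 3) ≠ 2), him2def, midim] at hmem
            exact hbn 0 (by decide) hmem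
        · refine ⟨⟨?_, ?_⟩, ?_⟩
          · intro hmem
            have hm : emb 1 y = mid n 1 0 := by
              rw [← mid_comm (by decide : (0:Fin 3) ≠ 1)]
              exact mem_inter_Sset (by decide) (subS hmem) ⟨y, rfl⟩
            have h2 : emb 1 y = emb 1 (qm n (fun _ => 0)) := hm.trans (mid_emb 1 0).symm
            rw [hm, mid_comm (by decide : (1:Fin 3) ≠ 0), him0def, midim] at hmem
            exact h0n 1 (by decide) hmem
          · intro hmem
            obtain ⟨y', hy', h'⟩ := Finset.mem_image.1 hmem
            rw [emb_inj h'] at hy'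
            exact hy hy'
          · intro hmem
            have hm : emb 1 y = mid n 1 2 :=
              mem_inter_Sset (by decide) ⟨y, rfl⟩ (subS hmem)
            have h2 : emb 1 y = emb 1 (qm n (fun _ => 2)) := hm.trans (mid_emb 1 2).symm
            rw [emb_inj h2] at hy
            exact hy ha2
        · refine ⟨⟨?_, ?_⟩, ?_⟩
          · intro hmem
            have hm : emb 2 y = mid n 2 0 := by
              rw [← mid_comm (by decide : (0:Fin 3) ≠ 2)]
              exact mem_inter_Sset (by decide) (subS hmem) ⟨y, rfl⟩
            rw [hm, mid_comm (by decide : (2:Fin 3) ≠ 0), him0def, midim] at hmem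
            exact h0n 2 (by decide) hmem
          · intro hmem
            have hm : emb 2 y = mid n 2 1 := by
              rw [← mid_comm (by decide : (1:Fin 3) ≠ 2)]
              exact mem_inter_Sset (by decide) (subS hmem) ⟨y, rfl⟩
            have h2 : emb 2 y = emb 2 (qm n (fun _ => 1)) := hm.trans (mid_emb 2 1).symm
            rw [emb_inj h2] at hy
            exact hy hb1
          · intro hmem
            obtain ⟨y', hy', h'⟩ := Finset.mem_image.1 hmem
            rw [emb_inj h'] at hy'
            exact hy hy'
    rw [hcomp]
    exact hglue2
  · -- extreme set condition
    ext x
    constructor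
    · rintro ⟨hX, k, rfl⟩
      simp only [Finset.coe_union, Set.mem_union, Finset.mem_coe, Finset.mem_union] at hX
      rcases hX with (hm | hm) | hm
      · obtain ⟨y, hy, h'⟩ := Finset.mem_image.1 hm
        obtain ⟨hik, _⟩ := emb_eq_ext h'
        rw [Set.mem_singleton_iff, ← hik]
      · obtain ⟨y, hy, h'⟩ := Finset.mem_image.1 hm
        obtain ⟨hik, hy'⟩ := emb_eq_ext h'
        rw [hy', ← hik] at hy
        exact absurd hy (han 1 (by decide))
      · obtain ⟨y, hy, h'⟩ := Finset.mem_image.1 hm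
        obtain ⟨hik, hy'⟩ := emb_eq_ext h'
        rw [hy', ← hik] at hy
        exact absurd hy (hbn 2 (by decide))
    · rintro rfl
      constructor
      · simp only [Finset.coe_union, Set.mem_union, Finset.mem_coe, Finset.mem_union]
        refine Or.inl (Or.inl ?_)
        have : emb (n := n) 0 (qm n (fun _ => 0)) = qm (n+1) (fun _ => 0) := emb_ext_self 0
        rw [← this]
        exact Finset.mem_image_of_mem _ h00
      · exact ⟨0, rfl⟩

theorem good_exists : ∀ n, ∃ X, GoodFVS n 0 X := by
  intro n
  induction n with
  | zero => exact base_case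
  | succ n ih => exact step_case ih
end Step

theorem stmt12 (n : Nat) :
    ∃ X : Finset (Quotient (triSetoid 3 n)),
      IsFeedbackVertexSet (sierpinskiTriangle 3 n) ↑X ∧
      X.card = feedbackNumber (sierpinskiTriangle 3 n) ∧
      ∃ k : Fin 3,
        (↑X : Set (Quotient (triSetoid 3 n))) ∩
          Set.range (fun i : Fin 3 => Quotient.mk (triSetoid 3 n) (fun _ => i)) =
        {Quotient.mk (triSetoid 3 n) (fun _ => k)} := by
  obtain ⟨X, hcard, hfvs, hext⟩ := good_exists n
  refine ⟨X, hfvs, ?_, 0, hext⟩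
  have hmem : X.card ∈ {k | ∃ Y : Finset (Qt n), Y.card = k ∧
      IsFeedbackVertexSet (sierpinskiTriangle 3 n) ↑Y} := ⟨X, rfl, hfvs⟩
  refine le_antisymm ?_ (Nat.sInf_le hmem)
  refine le_csInf ⟨_, hmem⟩ ?_
  rintro b ⟨Y, rfl, hY⟩
  rw [hcard]
  exact fvs_lower Y hY
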